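/- Let E be a real inner product space, Δ : E →ₗ[ℝ] E a symmetric linear map with ker Δ finite-dimensional, and suppose Δ satisfies the coercivity estimate with constant k > 0. Then for every α ∈ (ker Δ)ᗮ and every γ ∈ E one has |⟪α, γ⟫| ≤ k ‖α‖ ‖Δ γ‖. (This is the boundedness of the weak-solution functional L(Δγ) = ⟪α, γ⟫ established via Lemma 2 in the proof of the Hodge theorem.) -/

import Mathlib

open scoped RealInnerProductSpace

/-- Boundedness of the weak-solution functional `L(Δγ) = ⟪α, γ⟫`: if `Δ` is
symmetric with finite-dimensional kernel and satisfies the coercivity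
estimate with constant `k > 0`, then `|⟪α, γ⟫| ≤ k ‖α‖ ‖Δ γ‖` for every
`α ∈ (ker Δ)ᗮ` and every `γ`. -/
theorem weak_solution_functional_bounded
    {E : Type*} [NormedAddCommGroup E] [InnerProductSpace ℝ E]
    (Δ : E →ₗ[ℝ] E)
    (hsym : ∀ x y : E, ⟪Δ x, y⟫ = ⟪x, Δ y⟫)
    (hfin : FiniteDimensional ℝ (LinearMap.ker Δ))
    (k : ℝ) (hk : 0 < k)
    (hcoercive : ∀ γ ∈ (LinearMap.ker Δ)ᗮ, ‖γ‖ ≤ k * ‖Δ γ‖) :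
    ∀ α ∈ (LinearMap.ker Δ)ᗮ, ∀ γ : E, |⟪α, γ⟫| ≤ k * ‖α‖ * ‖Δ γ‖ := by
  intro α hα γ
  set K := LinearMap.ker Δ
  haveI : K.HasOrthogonalProjection := Submodule.HasOrthogonalProjection.ofCompleteSpace K
  set p : E := (Submodule.orthogonalProjectionOnto K γ : E)
  set γ' : E := γ - p with hγ'
  have hpmem : p ∈ K := (Submodule.orthogonalProjectionOnto K γ).2
  have hγ'mem : γ' ∈ Kᗮ := by
    have := K.sub_starProjection_mem_orthogonal γ; rwa [Submodule.starProjection_apply] at this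
  have hΔp : Δ p = 0 := hpmem
  have hΔγ' : Δ γ' = Δ γ := by
    simp [hγ', map_sub, hΔp]
  have hinner : ⟪α, γ⟫ = ⟪α, γ'⟫ := by
    have : ⟪α, p⟫ = 0 := by
      rw [real_inner_comm]
      exact hα p hpmem
    simp [hγ', inner_sub_right, this]
  rw [hinner]
  calc |⟪α, γ'⟫| ≤ ‖α‖ * ‖γ'‖ := abs_real_inner_le_norm α γ'
    _ ≤ ‖α‖ * (k * ‖Δ γ'‖) := by
        exact mul_le_mul_of_nonneg_left (hcoercive γ' hγ'mem) (norm_nonneg α)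
    _ = k * ‖α‖ * ‖Δ γ‖ := by rw [hΔγ']; ring
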